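/- Let k be a commutative ring, A a unital k-algebra, and (C_r)_{r≥0} a formal associative deformation of A. Then every idempotent of A lifts to the deformed algebra: for every e₀ ∈ A with e₀·e₀ = e₀ there exists a sequence e : ℕ → A with e(0) = e₀ which is an idempotent for the deformed product, i.e. for every n ≥ 0, ∑_{i+j+l=n} C_i(e(j), e(l)) = e(n). -/

import Mathlib

open Finset

variable {k : Type*} [CommRing k] {A : Type*} [Ring A] [Algebra k A]

/-- The deformed (star) product of two formal series `a, b : ℕ → A`, with respect to a
formal deformation `(C_r)`:  `(a ⋆ b)(n) = ∑_{i+j+l=n} C_i(a(j), b(l))`. -/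
def starMul (C : ℕ → A →ₗ[k] A →ₗ[k] A) (a b : ℕ → A) : ℕ → A :=
  fun n => ∑ p ∈ antidiagonal n, ∑ q ∈ antidiagonal p.2, C p.1 (a q.1) (b q.2)

lemma reindexL (G : ℕ → ℕ → ℕ → ℕ → ℕ → A) (n : ℕ) :
    ∑ p ∈ antidiagonal n, ∑ q ∈ antidiagonal p.2, ∑ r ∈ antidiagonal q.1, ∑ s ∈ antidiagonal r.2,
        G p.1 r.1 s.1 s.2 q.2
    = ∑ P ∈ antidiagonal n, ∑ Q ∈ antidiagonal P.2, ∑ R ∈ antidiagonal Q.2, ∑ m ∈ antidiagonal P.1,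
        G m.1 m.2 Q.1 R.1 R.2 := by
  rw [Finset.sum_sigma', Finset.sum_sigma', Finset.sum_sigma',
      Finset.sum_sigma', Finset.sum_sigma', Finset.sum_sigma']
  refine Finset.sum_nbij'
    (i := fun x => ⟨⟨⟨(x.1.1.1.1 + x.1.2.1, x.2.1 + x.2.2 + x.1.1.2.2), (x.2.1, x.2.2 + x.1.1.2.2)⟩,
        (x.2.2, x.1.1.2.2)⟩, (x.1.1.1.1, x.1.2.1)⟩)
    (j := fun y => ⟨⟨⟨(y.2.1, y.2.2 + y.1.1.2.1 + y.1.2.1 + y.1.2.2),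
        (y.2.2 + y.1.1.2.1 + y.1.2.1, y.1.2.2)⟩, (y.2.2, y.1.1.2.1 + y.1.2.1)⟩, (y.1.1.2.1, y.1.2.1)⟩)
    ?_ ?_ ?_ ?_ ?_ <;>
  · rintro ⟨⟨⟨⟨p1,p2⟩,q1,q2⟩,r1,r2⟩,s1,s2⟩ h
    simp only [mem_sigma, HasAntidiagonal.mem_antidiagonal] at h
    simp [mem_sigma, HasAntidiagonal.mem_antidiagonal, Sigma.mk.inj_iff, Prod.mk.injEq]
    try omega

lemma reindexR (G : ℕ → ℕ → ℕ → ℕ → ℕ → A) (n : ℕ) :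
    ∑ p ∈ antidiagonal n, ∑ q ∈ antidiagonal p.2, ∑ r ∈ antidiagonal q.2, ∑ s ∈ antidiagonal r.2,
        G p.1 r.1 q.1 s.1 s.2
    = ∑ P ∈ antidiagonal n, ∑ Q ∈ antidiagonal P.2, ∑ R ∈ antidiagonal Q.2, ∑ m ∈ antidiagonal P.1,
        G m.1 m.2 Q.1 R.1 R.2 := by
  rw [Finset.sum_sigma', Finset.sum_sigma', Finset.sum_sigma',
      Finset.sum_sigma', Finset.sum_sigma', Finset.sum_sigma']
  refine Finset.sum_nbij'
    (i := fun x => ⟨⟨⟨(x.1.1.1.1 + x.1.2.1, x.1.1.2.1 + x.2.1 + x.2.2), (x.1.1.2.1, x.2.1 + x.2.2)⟩,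
        (x.2.1, x.2.2)⟩, (x.1.1.1.1, x.1.2.1)⟩)
    (j := fun y => ⟨⟨⟨(y.2.1, y.1.1.2.1 + y.2.2 + y.1.2.1 + y.1.2.2),
        (y.1.1.2.1, y.2.2 + y.1.2.1 + y.1.2.2)⟩, (y.2.2, y.1.2.1 + y.1.2.2)⟩, (y.1.2.1, y.1.2.2)⟩)
    ?_ ?_ ?_ ?_ ?_ <;>
  · rintro ⟨⟨⟨⟨p1,p2⟩,q1,q2⟩,r1,r2⟩,s1,s2⟩ h
    simp only [mem_sigma, HasAntidiagonal.mem_antidiagonal] at h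
    simp [mem_sigma, HasAntidiagonal.mem_antidiagonal, Sigma.mk.inj_iff, Prod.mk.injEq]
    try omega

lemma starMul_assoc (C : ℕ → A →ₗ[k] A →ₗ[k] A)
    (hassoc : ∀ (n : ℕ) (a b c : A),
      ∑ p ∈ antidiagonal n, C p.1 (C p.2 a b) c =
      ∑ p ∈ antidiagonal n, C p.1 a (C p.2 b c))
    (a b c : ℕ → A) (n : ℕ) :
    starMul C (starMul C a b) c n = starMul C a (starMul C b c) n := by
  simp only [starMul, map_sum, LinearMap.sum_apply]
  rw [reindexL (fun i j u v w => C i (C j (a u) (b v)) (c w)) n,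
      reindexR (fun i j u v w => C i (a u) (C j (b v) (c w))) n]
  refine Finset.sum_congr rfl fun P _ => Finset.sum_congr rfl fun Q _ =>
    Finset.sum_congr rfl fun R _ => ?_
  exact hassoc P.1 (a Q.1) (b R.1) (c R.2)

/-- The recursively constructed lift of an idempotent. -/
def liftIdem (C : ℕ → A →ₗ[k] A →ₗ[k] A) (e₀ : A) : ℕ → A
  | 0 => e₀
  | (n+1) => (1 - e₀ - e₀) * ∑ p ∈ antidiagonal (n+1), ∑ q ∈ antidiagonal p.2,
      if _h : q.1 < n+1 ∧ q.2 < n+1 then C p.1 (liftIdem C e₀ q.1) (liftIdem C e₀ q.2) else 0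
  decreasing_by
  · exact _h.1
  · exact _h.2

/-- For a formal associative deformation `(C_r)` of a unital
`k`-algebra `A`, every idempotent `e₀` of `A` lifts to an idempotent of the deformed
algebra: there is a sequence `e : ℕ → A` with `e(0) = e₀` and `e ⋆ e = e`. -/
theorem idempotent_lifts_in_formal_deformation
    (C : ℕ → A →ₗ[k] A →ₗ[k] A)
    (hC0 : ∀ a b : A, C 0 a b = a * b)
    (hassoc : ∀ (n : ℕ) (a b c : A),
      ∑ p ∈ antidiagonal n, C p.1 (C p.2 a b) c =
      ∑ p ∈ antidiagonal n, C p.1 a (C p.2 b c)) :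
    ∀ e₀ : A, e₀ * e₀ = e₀ →
      ∃ e : ℕ → A, e 0 = e₀ ∧ ∀ n : ℕ, starMul C e e n = e n := by
  intro e₀ he
  have h0 : liftIdem C e₀ 0 = e₀ := by rw [liftIdem]
  refine ⟨liftIdem C e₀, h0, fun n => ?_⟩
  induction n using Nat.strong_induction_on with
  | _ n ih =>
    rcases n with _ | N
    · simp [starMul, h0, hC0, he]
    · set e : ℕ → A := liftIdem C e₀ with hedef
      have he0 : e 0 = e₀ := h0
      set X : A := ∑ p ∈ antidiagonal (N+1), ∑ q ∈ antidiagonal p.2,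
          if q.1 < N+1 ∧ q.2 < N+1 then C p.1 (e q.1) (e q.2) else 0 with hXdef
      have hen : e (N+1) = (1 - e₀ - e₀) * X := by
        rw [hXdef, hedef, liftIdem]
        simp only [dite_eq_ite]
      -- the truncated series
      set f : ℕ → A := fun m => if m < N+1 then e m else 0 with hfdef
      have hf0 : f 0 = e₀ := by rw [hfdef]; simp [he0]
      have hflt : ∀ m, m < N+1 → f m = e m := fun m hm => by rw [hfdef]; simp [hm]
      have hfn : f (N+1) = 0 := by rw [hfdef]; simp
      have h1 : ∀ m, m < N+1 → starMul C f f m = e m := by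
        intro m hm
        rw [← ih m hm]
        simp only [starMul]
        refine Finset.sum_congr rfl fun p hp => Finset.sum_congr rfl fun q hq => ?_
        simp only [HasAntidiagonal.mem_antidiagonal] at hp hq
        rw [hflt q.1 (by omega), hflt q.2 (by omega)]
      have h2 : starMul C f f (N+1) = X := by
        rw [hXdef]
        simp only [starMul]
        refine Finset.sum_congr rfl fun p hp => Finset.sum_congr rfl fun q hq => ?_
        simp only [HasAntidiagonal.mem_antidiagonal] at hp hq
        by_cases hc : q.1 < N+1 ∧ q.2 < N+1
        · rw [if_pos hc, hflt q.1 hc.1, hflt q.2 hc.2]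
        · rw [if_neg hc]
          have hor : q.1 = N+1 ∨ q.2 = N+1 := by omega
          rcases hor with h | h
          · have hz : f q.1 = 0 := by rw [h, hfn]
            rw [hz]; simp
          · have hz : f q.2 = 0 := by rw [h, hfn]
            rw [hz]; simp
      have hsplitL : ∀ m, m ≤ N+1 → starMul C f f m = f m + (if m = N+1 then X else 0) := by
        intro m hm
        by_cases h : m = N+1
        · rw [if_pos h, h, h2, hfn, zero_add]
        · have hm' : m < N+1 := by omega
          rw [if_neg h, h1 m hm', hflt m hm', add_zero]
      have hcorr3 : ∑ p ∈ antidiagonal (N+1), ∑ q ∈ antidiagonal p.2,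
          C p.1 (if q.1 = N+1 then X else 0) (f q.2) = X * e₀ := by
        rw [Finset.sum_eq_single_of_mem ((0:ℕ), N+1) (by simp)
            (fun p hp hne => Finset.sum_eq_zero fun q hq => by
              simp only [HasAntidiagonal.mem_antidiagonal] at hp hq
              rw [if_neg (show q.1 ≠ N+1 from fun h =>
                hne (Prod.ext (by omega) (by omega)))]
              simp)]
        rw [Finset.sum_eq_single_of_mem ((N+1:ℕ), (0:ℕ)) (by simp)
            (fun q hq hne => by
              simp only [HasAntidiagonal.mem_antidiagonal] at hq
              rw [if_neg (show q.1 ≠ N+1 from fun h =>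
                hne (Prod.ext h (by omega)))]
              simp)]
        simp [hC0, hf0]
      have hcorr4 : ∑ p ∈ antidiagonal (N+1), ∑ q ∈ antidiagonal p.2,
          C p.1 (f q.1) (if q.2 = N+1 then X else 0) = e₀ * X := by
        rw [Finset.sum_eq_single_of_mem ((0:ℕ), N+1) (by simp)
            (fun p hp hne => Finset.sum_eq_zero fun q hq => by
              simp only [HasAntidiagonal.mem_antidiagonal] at hp hq
              rw [if_neg (show q.2 ≠ N+1 from fun h =>
                hne (Prod.ext (by omega) (by omega)))]
              simp)]
        rw [Finset.sum_eq_single_of_mem ((0:ℕ), N+1) (by simp)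
            (fun q hq hne => by
              simp only [HasAntidiagonal.mem_antidiagonal] at hq
              rw [if_neg (show q.2 ≠ N+1 from fun h =>
                hne (Prod.ext (by omega) h))]
              simp)]
        simp [hC0, hf0]
      have h3 : starMul C (starMul C f f) f (N+1) = X + X * e₀ := by
        have step1 : starMul C (starMul C f f) f (N+1)
            = ∑ p ∈ antidiagonal (N+1), ∑ q ∈ antidiagonal p.2,
                (C p.1 (f q.1) (f q.2) + C p.1 (if q.1 = N+1 then X else 0) (f q.2)) := by
          show ∑ p ∈ antidiagonal (N+1), ∑ q ∈ antidiagonal p.2,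
              C p.1 (starMul C f f q.1) (f q.2) = _
          refine Finset.sum_congr rfl fun p hp => Finset.sum_congr rfl fun q hq => ?_
          simp only [HasAntidiagonal.mem_antidiagonal] at hp hq
          rw [hsplitL q.1 (by omega), map_add, LinearMap.add_apply]
        rw [step1,
            Finset.sum_congr rfl (fun p _ => Finset.sum_add_distrib), Finset.sum_add_distrib,
            hcorr3]
        exact congrArg (fun y => y + X * e₀) h2
      have h4 : starMul C f (starMul C f f) (N+1) = X + e₀ * X := by
        have step1 : starMul C f (starMul C f f) (N+1)
            = ∑ p ∈ antidiagonal (N+1), ∑ q ∈ antidiagonal p.2,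
                (C p.1 (f q.1) (f q.2) + C p.1 (f q.1) (if q.2 = N+1 then X else 0)) := by
          show ∑ p ∈ antidiagonal (N+1), ∑ q ∈ antidiagonal p.2,
              C p.1 (f q.1) (starMul C f f q.2) = _
          refine Finset.sum_congr rfl fun p hp => Finset.sum_congr rfl fun q hq => ?_
          simp only [HasAntidiagonal.mem_antidiagonal] at hp hq
          rw [hsplitL q.2 (by omega), map_add]
        rw [step1,
            Finset.sum_congr rfl (fun p _ => Finset.sum_add_distrib), Finset.sum_add_distrib,
            hcorr4]
        exact congrArg (fun y => y + e₀ * X) h2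
      have hcomm : X * e₀ = e₀ * X := by
        have h := starMul_assoc C hassoc f f f (N+1)
        rw [h3, h4] at h
        exact add_left_cancel h
      -- final computation
      calc starMul C e e (N+1)
          = ∑ p ∈ antidiagonal (N+1), ∑ q ∈ antidiagonal p.2,
              ((if q.1 < N+1 ∧ q.2 < N+1 then C p.1 (e q.1) (e q.2) else 0)
               + (if q.1 < N+1 ∧ q.2 < N+1 then 0 else C p.1 (e q.1) (e q.2))) := by
            simp only [starMul]
            refine Finset.sum_congr rfl fun p hp => Finset.sum_congr rfl fun q hq => ?_
            split <;> simp
        _ = X + (e (N+1) * e₀ + e₀ * e (N+1)) := by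
            have hB : ∑ p ∈ antidiagonal (N+1), ∑ q ∈ antidiagonal p.2,
                (if q.1 < N+1 ∧ q.2 < N+1 then 0 else C p.1 (e q.1) (e q.2))
                = e (N+1) * e₀ + e₀ * e (N+1) := by
              rw [Finset.sum_eq_single_of_mem ((0:ℕ), N+1) (by simp)
                  (fun p hp hne => Finset.sum_eq_zero fun q hq => by
                    simp only [HasAntidiagonal.mem_antidiagonal] at hp hq
                    have hcond : q.1 < N+1 ∧ q.2 < N+1 := by
                      simp only [ne_eq, Prod.ext_iff, not_and] at hne
                      omega
                    rw [if_pos hcond])]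
              rw [Finset.sum_eq_add_of_mem ((N+1:ℕ), (0:ℕ)) ((0:ℕ), N+1)
                  (by simp) (by simp) (by simp)
                  (fun q hq hne => by
                    simp only [HasAntidiagonal.mem_antidiagonal] at hq
                    obtain ⟨hne1, hne2⟩ := hne
                    simp only [ne_eq, Prod.ext_iff, not_and] at hne1 hne2
                    have hcond : q.1 < N+1 ∧ q.2 < N+1 := by omega
                    rw [if_pos hcond])]
              simp [hC0, he0]
            rw [Finset.sum_congr rfl (fun p _ => Finset.sum_add_distrib),
                Finset.sum_add_distrib, hB, ← hXdef]
        _ = e (N+1) := by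
            rw [hen]
            have hmul : e₀ * (e₀ * X) = e₀ * X := by rw [← mul_assoc, he]
            calc X + ((1 - e₀ - e₀) * X * e₀ + e₀ * ((1 - e₀ - e₀) * X))
                = X + ((1 - e₀ - e₀) * (e₀ * X) + e₀ * ((1 - e₀ - e₀) * X)) := by
                  rw [mul_assoc, hcomm]
              _ = (1 - e₀ - e₀) * X := by
                  simp only [sub_mul, mul_sub, one_mul, hmul]
                  abel
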